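/- arXiv:2305.18020 — 2 statements merged into one kernel-verified Lean document; each statement's English description precedes it below -/
import Mathlib

section
/- If f and u'' are both logconcave, then for every integer N ≥ 2 the dual system has at most one solution: if (0 = s₀ < s₁ < … < s_N = 1; x₁,…,x_N) and (0 = s₀' < s₁' < … < s_N' = 1; x₁',…,x_N') both satisfy x_k = φ(s_{k−1}, s_k) for k = 1,…,N and s_k = μ(x_k, x_{k+1}) for k = 1,…,N−1 (and analogously for the primed sequences), then s_k = s_k' for all k and x_k = x_k' for all k. -/
open MeasureTheory Set

/-- The mean of the "density" `g` conditional on the interval `(a, b)`. -/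
noncomputable def condMean (g : ℝ → ℝ) (a b : ℝ) : ℝ :=
  (∫ t in a..b, t * g t) / (∫ t in a..b, g t)

/-- A strictly positive function on `[0,1]` is logconcave if its log is concave there. -/
def LogConcaveOn01 (g : ℝ → ℝ) : Prop :=
  ConcaveOn ℝ (Icc (0:ℝ) 1) fun t => Real.log (g t)

/-- The dual system: cutoffs `0 = s 0 < s 1 < … < s N = 1` and signals `x 1, …, x N`
with `x k` the conditional mean of `g` on `(s (k-1), s k)` and `s k` the conditional
mean of `w` on `(x k, x (k+1))`. -/
def DualSystem (g w : ℝ → ℝ) (N : ℕ) (s x : ℕ → ℝ) : Prop :=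
  s 0 = 0 ∧ s N = 1 ∧ (∀ k < N, s k < s (k + 1)) ∧
    (∀ k, 1 ≤ k → k ≤ N → x k = condMean g (s (k - 1)) (s k)) ∧
    (∀ k, 1 ≤ k → k ≤ N - 1 → s k = condMean w (x k) (x (k + 1)))

section Aux
variable {g : ℝ → ℝ}

lemma int_pos (hg : Continuous g) (hpos : ∀ t ∈ Icc (0:ℝ) 1, 0 < g t)
    {a b : ℝ} (h0 : 0 ≤ a) (hab : a < b) (h1 : b ≤ 1) :
    0 < ∫ t in a..b, g t := by
  apply intervalIntegral.intervalIntegral_pos_of_pos_on (hg.intervalIntegrable a b) _ hab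
  intro t ht
  exact hpos t ⟨le_of_lt (lt_of_le_of_lt h0 ht.1), le_of_lt (lt_of_lt_of_le ht.2 h1)⟩

lemma int_tg_sub (hg : Continuous g) (c : ℝ) (a b : ℝ) :
    ∫ t in a..b, (t - c) * g t = (∫ t in a..b, t * g t) - c * ∫ t in a..b, g t := by
  have e : ∀ t : ℝ, (t - c) * g t = t * g t - c * g t := fun t => by ring
  simp_rw [e]
  rw [intervalIntegral.integral_sub
      (Continuous.intervalIntegrable (by fun_prop) a b)
      (Continuous.intervalIntegrable (by fun_prop) a b),
    intervalIntegral.integral_const_mul]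

lemma condMean_gt (hg : Continuous g) (hpos : ∀ t ∈ Icc (0:ℝ) 1, 0 < g t)
    {a b : ℝ} (h0 : 0 ≤ a) (hab : a < b) (h1 : b ≤ 1) :
    a < condMean g a b := by
  have hI := int_pos hg hpos h0 hab h1
  rw [condMean, lt_div_iff₀ hI]
  have : 0 < ∫ t in a..b, (t - a) * g t := by
    apply intervalIntegral.intervalIntegral_pos_of_pos_on (f := fun t => (t - a) * g t)
      (Continuous.intervalIntegrable (by fun_prop) a b) _ hab
    intro t ht
    exact mul_pos (by linarith [ht.1]) (hpos t ⟨by linarith [ht.1], by linarith [ht.2]⟩)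
  rw [int_tg_sub hg] at this
  linarith

lemma condMean_lt (hg : Continuous g) (hpos : ∀ t ∈ Icc (0:ℝ) 1, 0 < g t)
    {a b : ℝ} (h0 : 0 ≤ a) (hab : a < b) (h1 : b ≤ 1) :
    condMean g a b < b := by
  have hI := int_pos hg hpos h0 hab h1
  rw [condMean, div_lt_iff₀ hI]
  have hp : 0 < ∫ t in a..b, (b - t) * g t := by
    apply intervalIntegral.intervalIntegral_pos_of_pos_on (f := fun t => (b - t) * g t)
      (Continuous.intervalIntegrable (by fun_prop) a b) _ hab
    intro t ht
    exact mul_pos (by linarith [ht.2]) (hpos t ⟨by linarith [ht.1], by linarith [ht.2]⟩)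
  have hneg : ∫ t in a..b, (b - t) * g t = - ∫ t in a..b, (t - b) * g t := by
    rw [← intervalIntegral.integral_neg]; congr 1; ext t; ring
  rw [hneg, int_tg_sub hg] at hp
  linarith

lemma int_sub_condMean (hg : Continuous g) (hpos : ∀ t ∈ Icc (0:ℝ) 1, 0 < g t)
    {a b : ℝ} (h0 : 0 ≤ a) (hab : a < b) (h1 : b ≤ 1) :
    ∫ t in a..b, (t - condMean g a b) * g t = 0 := by
  have hI := int_pos hg hpos h0 hab h1
  rw [int_tg_sub hg, condMean]
  field_simp
  ring

end Aux

open MeasureTheory Set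

variable {g : ℝ → ℝ}

lemma condMean_mono_right (hg : Continuous g) (hpos : ∀ t ∈ Icc (0:ℝ) 1, 0 < g t)
    {a b b' : ℝ} (h0 : 0 ≤ a) (hab : a < b) (hbb : b < b') (h1 : b' ≤ 1) :
    condMean g a b < condMean g a b' := by
  set c := condMean g a b with hc
  have hcb : c < b := condMean_lt hg hpos h0 hab (by linarith)
  have h2 : 0 < ∫ t in b..b', (t - c) * g t := by
    apply intervalIntegral.intervalIntegral_pos_of_pos_on (f := fun t => (t - c) * g t)
      (Continuous.intervalIntegrable (by fun_prop) b b') _ hbb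
    intro t ht
    exact mul_pos (by linarith [ht.1]) (hpos t ⟨by linarith [ht.1], by linarith [ht.2]⟩)
  have h3 : ∫ t in a..b', (t - c) * g t
      = (∫ t in a..b, (t - c) * g t) + ∫ t in b..b', (t - c) * g t :=
    (intervalIntegral.integral_add_adjacent_intervals
      (Continuous.intervalIntegrable (by fun_prop) a b)
      (Continuous.intervalIntegrable (by fun_prop) b b')).symm
  rw [int_sub_condMean hg hpos h0 hab (by linarith)] at h3
  have h4 : 0 < ∫ t in a..b', (t - c) * g t := by rw [h3]; linarith
  rw [int_tg_sub hg] at h4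
  have hI := int_pos hg hpos h0 (lt_trans hab hbb) h1
  rw [condMean, lt_div_iff₀ hI]
  linarith

lemma condMean_mono_left (hg : Continuous g) (hpos : ∀ t ∈ Icc (0:ℝ) 1, 0 < g t)
    {a a' b : ℝ} (h0 : 0 ≤ a) (haa : a < a') (hab : a' < b) (h1 : b ≤ 1) :
    condMean g a b < condMean g a' b := by
  set c := condMean g a' b with hc
  have hca : a' < c := condMean_gt hg hpos (by linarith) hab h1
  have h2 : 0 < ∫ t in a..a', (c - t) * g t := by
    apply intervalIntegral.intervalIntegral_pos_of_pos_on (f := fun t => (c - t) * g t)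
      (Continuous.intervalIntegrable (by fun_prop) a a') _ haa
    intro t ht
    exact mul_pos (by linarith [ht.2]) (hpos t ⟨by linarith [ht.1], by linarith [ht.2]⟩)
  have h2' : ∫ t in a..a', (t - c) * g t < 0 := by
    have : ∫ t in a..a', (c - t) * g t = - ∫ t in a..a', (t - c) * g t := by
      rw [← intervalIntegral.integral_neg]; congr 1; ext t; ring
    linarith [this ▸ h2]
  have h3 : ∫ t in a..b, (t - c) * g t
      = (∫ t in a..a', (t - c) * g t) + ∫ t in a'..b, (t - c) * g t :=
    (intervalIntegral.integral_add_adjacent_intervals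
      (Continuous.intervalIntegrable (by fun_prop) a a')
      (Continuous.intervalIntegrable (by fun_prop) a' b)).symm
  rw [int_sub_condMean hg hpos (by linarith) hab h1] at h3
  have h4 : ∫ t in a..b, (t - c) * g t < 0 := by rw [h3]; linarith
  rw [int_tg_sub hg] at h4
  have hI := int_pos hg hpos h0 (lt_trans haa hab) h1
  rw [condMean, div_lt_iff₀ hI]
  linarith

variable {g : ℝ → ℝ}

lemma condMean_shift (hg : Continuous g) (hpos : ∀ t ∈ Icc (0:ℝ) 1, 0 < g t)
    (hlc : LogConcaveOn01 g) {a b m : ℝ}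
    (h0 : 0 ≤ a) (hab : a < b) (hm : 0 ≤ m) (h1 : b + m ≤ 1) :
    condMean g (a + m) (b + m) ≤ condMean g a b + m := by
  have hb1 : b ≤ 1 := by linarith
  set c := condMean g a b with hc
  have hca : a < c := condMean_gt hg hpos h0 hab hb1
  have hcb : c < b := condMean_lt hg hpos h0 hab hb1
  have hc0 : 0 ≤ c := by linarith
  -- the log-concavity cross inequality
  have key2 : ∀ p q : ℝ, 0 ≤ p → p ≤ q → q + m ≤ 1 → g (q + m) * g p ≤ g (p + m) * g q := by
    intro p q hp0 hpq hq1
    rcases eq_or_lt_of_le hpq with rfl | hpq'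
    · exact le_refl _
    rcases eq_or_lt_of_le hm with rfl | hm'
    · simp [mul_comm]
    have hT : (0:ℝ) < q + m - p := by linarith
    set l1 : ℝ := m / (q + m - p) with hl1
    set l2 : ℝ := (q - p) / (q + m - p) with hl2
    have hl1p : 0 ≤ l1 := div_nonneg (by linarith) (le_of_lt hT)
    have hl2p : 0 ≤ l2 := div_nonneg (by linarith) (le_of_lt hT)
    have hsum : l2 + l1 = 1 := by
      rw [hl2, hl1, ← add_div, div_eq_one_iff_eq hT.ne']; ring
    have hsum' : l1 + l2 = 1 := by linarith
    have hpmem : p ∈ Icc (0:ℝ) 1 := ⟨hp0, by linarith⟩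
    have hqmmem : q + m ∈ Icc (0:ℝ) 1 := ⟨by linarith, hq1⟩
    have i1 := hlc.2 hpmem hqmmem hl2p hl1p hsum
    have i2 := hlc.2 hpmem hqmmem hl1p hl2p hsum'
    have e1 : l2 • p + l1 • (q + m) = p + m := by
      simp only [smul_eq_mul, hl1, hl2]; field_simp; ring
    have e2 : l1 • p + l2 • (q + m) = q := by
      simp only [smul_eq_mul, hl1, hl2]; field_simp; ring
    rw [e1] at i1; rw [e2] at i2
    simp only [smul_eq_mul] at i1 i2
    -- sum the two inequalities
    have hsum2 : (l2 * Real.log (g p) + l1 * Real.log (g (q + m)))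
        + (l1 * Real.log (g p) + l2 * Real.log (g (q + m)))
        = Real.log (g p) + Real.log (g (q + m)) := by
      linear_combination (Real.log (g p) + Real.log (g (q + m))) * hsum'
    have hsumineq : Real.log (g (q + m)) + Real.log (g p)
        ≤ Real.log (g (p + m)) + Real.log (g q) := by
      linarith [add_le_add i1 i2, hsum2]
    have gp : 0 < g p := hpos p hpmem
    have gq : 0 < g q := hpos q ⟨by linarith, by linarith⟩
    have gpm : 0 < g (p + m) := hpos _ ⟨by linarith, by linarith⟩
    have gqm : 0 < g (q + m) := hpos _ hqmmem
    have := Real.exp_le_exp.mpr hsumineq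
    rwa [Real.exp_add, Real.exp_add, Real.exp_log gqm, Real.exp_log gp,
      Real.exp_log gpm, Real.exp_log gq] at this
  have gc : 0 < g c := hpos c ⟨hc0, by linarith⟩
  have gcm : 0 < g (c + m) := hpos (c + m) ⟨by linarith, by linarith⟩
  set lam : ℝ := g (c + m) / g c with hlam
  have hptwise : ∀ s ∈ Icc a b, (s - c) * g (s + m) ≤ lam * ((s - c) * g s) := by
    intro s hs
    rcases le_total c s with hcs | hsc
    · have hk := key2 c s hc0 hcs (by linarith [hs.2])
      have h5 : 0 ≤ s - c := by linarith
      rw [hlam, div_mul_eq_mul_div, le_div_iff₀ gc]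
      nlinarith [mul_le_mul_of_nonneg_left hk h5]
    · have hk := key2 s c (by linarith [hs.1]) hsc (by linarith)
      have h5 : 0 ≤ c - s := by linarith
      rw [hlam, div_mul_eq_mul_div, le_div_iff₀ gc]
      nlinarith [mul_le_mul_of_nonneg_left hk h5]
  have hmono : (∫ s in a..b, (s - c) * g (s + m))
      ≤ ∫ s in a..b, lam * ((s - c) * g s) :=
    intervalIntegral.integral_mono_on (le_of_lt hab)
      (Continuous.intervalIntegrable (by fun_prop) a b)
      (Continuous.intervalIntegrable (by fun_prop) a b) hptwise
  have hrhs : (∫ s in a..b, lam * ((s - c) * g s)) = 0 := by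
    rw [intervalIntegral.integral_const_mul, int_sub_condMean hg hpos h0 hab hb1]
    ring
  have hsub : (∫ s in a..b, (s - c) * g (s + m))
      = ∫ t in (a + m)..(b + m), (t - (c + m)) * g t := by
    rw [← intervalIntegral.integral_comp_add_right (fun t => (t - (c + m)) * g t) m]
    congr 1; ext s; ring_nf
  have hfinal : (∫ t in (a + m)..(b + m), (t - (c + m)) * g t) ≤ 0 := by
    rw [← hsub]; linarith [hmono, hrhs]
  rw [int_tg_sub hg] at hfinal
  have hI := int_pos hg hpos (by linarith : (0:ℝ) ≤ a + m) (by linarith : a + m < b + m) h1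
  rw [condMean, div_le_iff₀ hI]
  linarith

variable {g : ℝ → ℝ}

lemma condMean_lemC_lt (hg : Continuous g) (hpos : ∀ t ∈ Icc (0:ℝ) 1, 0 < g t)
    (hlc : LogConcaveOn01 g) {a b a' b' : ℝ}
    (h0 : 0 ≤ a) (hab : a < b) (hab' : a' < b') (ha : a ≤ a') (hb : b ≤ b')
    (h1 : b' ≤ 1) (hne : a' - a ≠ b' - b) :
    condMean g a' b' < condMean g a b + max (a' - a) (b' - b) := by
  rcases lt_or_gt_of_ne hne with hlt | hgt
  · -- a' - a < b' - b ; max = b' - b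
    have hmax : max (a' - a) (b' - b) = b' - b := max_eq_right (le_of_lt hlt)
    rw [hmax]
    have step1 : condMean g a' b' < condMean g (a + (b' - b)) b' := by
      apply condMean_mono_left hg hpos (by linarith) (by linarith) (by linarith) h1
    have step2 : condMean g (a + (b' - b)) (b + (b' - b)) ≤ condMean g a b + (b' - b) :=
      condMean_shift hg hpos hlc h0 hab (by linarith) (by linarith)
    have hbb : b + (b' - b) = b' := by ring
    rw [hbb] at step2
    linarith
  · -- a' - a > b' - b ; max = a' - a
    have hmax : max (a' - a) (b' - b) = a' - a := max_eq_left (le_of_lt hgt)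
    rw [hmax]
    have step2 : condMean g (a + (a' - a)) ((b' - (a' - a)) + (a' - a))
        ≤ condMean g a (b' - (a' - a)) + (a' - a) :=
      condMean_shift hg hpos hlc h0 (by linarith) (by linarith) (by linarith)
    have e1 : a + (a' - a) = a' := by ring
    have e2 : (b' - (a' - a)) + (a' - a) = b' := by ring
    rw [e1, e2] at step2
    have step1 : condMean g a (b' - (a' - a)) < condMean g a b := by
      apply condMean_mono_right hg hpos h0 (by linarith) (by linarith) (by linarith)
    linarith

lemma condMean_lemC_le (hg : Continuous g) (hpos : ∀ t ∈ Icc (0:ℝ) 1, 0 < g t)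
    (hlc : LogConcaveOn01 g) {a b a' b' : ℝ}
    (h0 : 0 ≤ a) (hab : a < b) (hab' : a' < b') (ha : a ≤ a') (hb : b ≤ b')
    (h1 : b' ≤ 1) :
    condMean g a' b' ≤ condMean g a b + max (a' - a) (b' - b) := by
  by_cases hne : a' - a = b' - b
  · have hmax : max (a' - a) (b' - b) = a' - a := by rw [hne]; exact max_self _
    rw [hmax]
    have step2 : condMean g (a + (a' - a)) (b + (a' - a)) ≤ condMean g a b + (a' - a) :=
      condMean_shift hg hpos hlc h0 hab (by linarith) (by linarith)
    have e1 : a + (a' - a) = a' := by ring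
    have e2 : b + (a' - a) = b' := by linarith
    rw [e1, e2] at step2
    exact step2
  · exact le_of_lt (condMean_lemC_lt hg hpos hlc h0 hab hab' ha hb h1 hne)

variable {g w : ℝ → ℝ} {N : ℕ} {s x : ℕ → ℝ}

lemma ds_mono (h : DualSystem g w N s x) :
    ∀ j k, j ≤ k → k ≤ N → s j ≤ s k := by
  intro j k hjk hkN
  induction k with
  | zero =>
    have : j = 0 := by omega
    rw [this]
  | succ n ih =>
    rcases Nat.lt_or_ge j (n+1) with hc | hc
    · exact le_trans (ih (by omega) (by omega)) (le_of_lt (h.2.2.1 n (by omega)))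
    · have : j = n + 1 := by omega
      rw [this]

lemma ds_bound (h : DualSystem g w N s x) :
    ∀ k ≤ N, 0 ≤ s k ∧ s k ≤ 1 :=
  fun k hk => ⟨h.1 ▸ ds_mono h 0 k (Nat.zero_le k) hk, h.2.1 ▸ ds_mono h k N hk le_rfl⟩

lemma ds_xmem (hg : Continuous g) (hgp : ∀ t ∈ Icc (0:ℝ) 1, 0 < g t)
    (h : DualSystem g w N s x) :
    ∀ k, k + 1 ≤ N → s k < x (k+1) ∧ x (k+1) < s (k+1) := by
  intro k hk
  have hx := h.2.2.2.1 (k+1) (by omega) hk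
  simp only [Nat.add_sub_cancel] at hx
  have h0 := (ds_bound h k (by omega)).1
  have h1b := (ds_bound h (k+1) hk).2
  have hlt := h.2.2.1 k (by omega)
  rw [hx]
  exact ⟨condMean_gt hg hgp h0 hlt h1b, condMean_lt hg hgp h0 hlt h1b⟩

lemma ds_key {g w : ℝ → ℝ} {N : ℕ} {s x s' x' : ℕ → ℝ}
    (hg : Continuous g) (hgp : ∀ t ∈ Icc (0:ℝ) 1, 0 < g t) (hglc : LogConcaveOn01 g)
    (hw : Continuous w) (hwp : ∀ t ∈ Icc (0:ℝ) 1, 0 < w t) (hwlc : LogConcaveOn01 w)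
    (hN : 2 ≤ N)
    (h1 : DualSystem g w N s x) (h2 : DualSystem g w N s' x')
    (hlt : s 1 < s' 1) : False := by
  obtain ⟨hs0, hsN, hss, hxdef, hsdef⟩ := h1
  obtain ⟨hs0', hsN', hss', hxdef', hsdef'⟩ := h2
  have h1' : DualSystem g w N s x := ⟨hs0, hsN, hss, hxdef, hsdef⟩
  have h2' : DualSystem g w N s' x' := ⟨hs0', hsN', hss', hxdef', hsdef'⟩
  have sb := ds_bound h1'
  have sb' := ds_bound h2'
  have xm := ds_xmem hg hgp h1'
  have xm' := ds_xmem hg hgp h2'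
  -- bounds on x k for 1 ≤ k ≤ N
  have xb : ∀ k, 1 ≤ k → k ≤ N → s (k-1) < x k ∧ x k < s k := by
    intro k hk1 hkN
    have := xm (k-1) (by omega)
    rwa [Nat.sub_add_cancel hk1] at this
  have xb' : ∀ k, 1 ≤ k → k ≤ N → s' (k-1) < x' k ∧ x' k < s' k := by
    intro k hk1 hkN
    have := xm' (k-1) (by omega)
    rwa [Nat.sub_add_cancel hk1] at this
  -- Step A : gap passes to the signals, strictly
  have stepA : ∀ k, 1 ≤ k → k ≤ N - 1 →
      0 < x' k - x k → x' k - x k < s' k - s k →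
      s' k - s k < x' (k+1) - x (k+1) := by
    intro k hk1 hkN hε hεδ
    by_contra hA
    push_neg at hA
    have hkN' : k + 1 ≤ N := by omega
    -- bounds
    have hxk := xb k hk1 (by omega)
    have hxk1 := xm k hkN'
    have hxk' := xb' k hk1 (by omega)
    have hxk1' := xm' k hkN'
    have h0k : 0 ≤ x k := le_of_lt (lt_of_le_of_lt (sb (k-1) (by omega)).1 hxk.1)
    have h0k' : 0 ≤ x' k := le_of_lt (lt_of_le_of_lt (sb' (k-1) (by omega)).1 hxk'.1)
    have h1k : x (k+1) ≤ 1 := le_of_lt (lt_of_lt_of_le hxk1.2 (sb (k+1) hkN').2)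
    have h1k' : x' (k+1) ≤ 1 := le_of_lt (lt_of_lt_of_le hxk1'.2 (sb' (k+1) hkN').2)
    have hxx : x k < x (k+1) := lt_trans hxk.2 hxk1.1
    have hxx' : x' k < x' (k+1) := lt_trans hxk'.2 hxk1'.1
    have hsk : s k = condMean w (x k) (x (k+1)) := hsdef k hk1 hkN
    have hsk' : s' k = condMean w (x' k) (x' (k+1)) := hsdef' k hk1 hkN
    rcases le_or_gt (x' (k+1)) (x (k+1)) with hc | hc
    · -- ε₂ ≤ 0
      have t1 : condMean w (x' k) (x' (k+1)) ≤ condMean w (x' k) (x (k+1)) := by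
        rcases eq_or_lt_of_le hc with heq | hlt2
        · rw [heq]
        · exact le_of_lt (condMean_mono_right hw hwp h0k' hxx' hlt2 h1k)
      have hx'k_lt : x' k < x (k+1) := lt_of_lt_of_le hxx' hc
      have t2 : condMean w (x' k) (x (k+1))
          < condMean w (x k) (x (k+1)) + max (x' k - x k) (x (k+1) - x (k+1)) := by
        apply condMean_lemC_lt hw hwp hwlc h0k hxx hx'k_lt (by linarith) le_rfl h1k
        intro hcon
        rw [sub_self] at hcon
        linarith
      rw [sub_self, max_eq_left (le_of_lt hε)] at t2
      rw [← hsk] at t2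
      rw [← hsk'] at t1
      linarith
    · -- 0 < ε₂ ≤ δ
      rcases eq_or_lt_of_le hA with heq | hlt3
      · -- ε₂ = δ : strict lemC since ε₁ ≠ ε₂
        have hne : x' k - x k ≠ x' (k+1) - x (k+1) := by
          intro hcon; rw [hcon, heq] at hεδ; exact lt_irrefl _ hεδ
        have t4 : condMean w (x' k) (x' (k+1))
            < condMean w (x k) (x (k+1)) + max (x' k - x k) (x' (k+1) - x (k+1)) :=
          condMean_lemC_lt hw hwp hwlc h0k hxx hxx' (by linarith) (le_of_lt hc) h1k' hne
        have hmax : max (x' k - x k) (x' (k+1) - x (k+1)) = x' (k+1) - x (k+1) :=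
          max_eq_right (by rw [heq]; linarith)
        rw [hmax, heq, ← hsk, ← hsk'] at t4
        linarith
      · -- ε₂ < δ : weak lemC suffices
        have t3 : condMean w (x' k) (x' (k+1))
            ≤ condMean w (x k) (x (k+1)) + max (x' k - x k) (x' (k+1) - x (k+1)) :=
          condMean_lemC_le hw hwp hwlc h0k hxx hxx' (by linarith) (le_of_lt hc) h1k'
        have hmax : max (x' k - x k) (x' (k+1) - x (k+1)) < s' k - s k :=
          max_lt hεδ hlt3
        rw [← hsk, ← hsk'] at t3
        linarith
  -- the invariant
  have Inv : ∀ k, 1 ≤ k → k ≤ N - 1 →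
      0 < x' k - x k ∧ x' k - x k < s' k - s k := by
    intro k hk
    induction k, hk using Nat.le_induction with
    | base =>
      intro _
      have hs1 : 0 < s 1 := by have := hss 0 (by omega); rwa [hs0] at this
      have hs1' : s' 1 ≤ 1 := (sb' 1 (by omega)).2
      have hx1 : x 1 = condMean g 0 (s 1) := by
        have := hxdef 1 le_rfl (by omega); rwa [show (1:ℕ) - 1 = 0 from rfl, hs0] at this
      have hx1' : x' 1 = condMean g 0 (s' 1) := by
        have := hxdef' 1 le_rfl (by omega); rwa [show (1:ℕ) - 1 = 0 from rfl, hs0'] at this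
      constructor
      · have := condMean_mono_right hg hgp le_rfl hs1 hlt hs1'
        rw [← hx1, ← hx1'] at this; linarith
      · have t := condMean_lemC_lt hg hgp hglc le_rfl hs1 (by linarith : (0:ℝ) < s' 1)
          le_rfl (le_of_lt hlt) hs1' (by rw [sub_self]; intro hcon; linarith)
        rw [sub_self, max_eq_right (by linarith : (0:ℝ) ≤ s' 1 - s 1), ← hx1, ← hx1'] at t
        linarith
    | succ k hk ih =>
      intro hk1
      obtain ⟨hε, hεδ⟩ := ih (by omega)
      have hδ : 0 < s' k - s k := lt_trans hε hεδ
      have hA2 := stepA k hk (by omega) hε hεδ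
      -- x-relations at k+1
      have hxr : x (k+1) = condMean g (s k) (s (k+1)) := by
        have := hxdef (k+1) (by omega) (by omega)
        rwa [Nat.add_sub_cancel] at this
      have hxr' : x' (k+1) = condMean g (s' k) (s' (k+1)) := by
        have := hxdef' (k+1) (by omega) (by omega)
        rwa [Nat.add_sub_cancel] at this
      have h0sk : 0 ≤ s k := (sb k (by omega)).1
      have h0sk' : 0 ≤ s' k := (sb' k (by omega)).1
      have hssk : s k < s (k+1) := hss k (by omega)
      have hssk' : s' k < s' (k+1) := hss' k (by omega)
      have h1sk1 : s (k+1) ≤ 1 := (sb (k+1) (by omega)).2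
      have h1sk1' : s' (k+1) ≤ 1 := (sb' (k+1) (by omega)).2
      -- first: the cutoff gap grows strictly
      have hδ2 : s' k - s k < s' (k+1) - s (k+1) := by
        by_contra hB
        push_neg at hB
        rcases le_or_gt (s' (k+1)) (s (k+1)) with hc | hc
        · have u1 : condMean g (s' k) (s' (k+1)) ≤ condMean g (s' k) (s (k+1)) := by
            rcases eq_or_lt_of_le hc with heq | hlt2
            · rw [heq]
            · exact le_of_lt (condMean_mono_right hg hgp h0sk' hssk' hlt2 h1sk1)
          have u2 : condMean g (s' k) (s (k+1))
              ≤ condMean g (s k) (s (k+1)) + max (s' k - s k) (s (k+1) - s (k+1)) :=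
            condMean_lemC_le hg hgp hglc h0sk hssk (lt_of_lt_of_le hssk' hc)
              (by linarith) le_rfl h1sk1
          rw [sub_self, max_eq_left (le_of_lt hδ)] at u2
          rw [← hxr] at u2
          rw [← hxr'] at u1
          linarith
        · have u3 : condMean g (s' k) (s' (k+1))
              ≤ condMean g (s k) (s (k+1)) + max (s' k - s k) (s' (k+1) - s (k+1)) :=
            condMean_lemC_le hg hgp hglc h0sk hssk hssk' (by linarith) (le_of_lt hc) h1sk1'
          have hmax : max (s' k - s k) (s' (k+1) - s (k+1)) ≤ s' k - s k :=
            max_le le_rfl hB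
          rw [← hxr, ← hxr'] at u3
          linarith
      -- then: the signal gap is below the new cutoff gap
      have hεnew : x' (k+1) - x (k+1) < s' (k+1) - s (k+1) := by
        have t := condMean_lemC_lt hg hgp hglc h0sk hssk hssk' (by linarith)
          (by linarith) h1sk1' (by intro hcon; rw [hcon] at hδ2; exact lt_irrefl _ hδ2)
        rw [max_eq_right (le_of_lt hδ2), ← hxr, ← hxr'] at t
        linarith
      exact ⟨by linarith, hεnew⟩
  -- final contradiction at k = N
  obtain ⟨hε, hεδ⟩ := Inv (N-1) (by omega) le_rfl
  have hA := stepA (N-1) (by omega) le_rfl hε hεδ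
  rw [Nat.sub_add_cancel (by omega : 1 ≤ N)] at hA
  have hxr : x N = condMean g (s (N-1)) 1 := by
    have := hxdef N (by omega) le_rfl
    rwa [hsN] at this
  have hxr' : x' N = condMean g (s' (N-1)) 1 := by
    have := hxdef' N (by omega) le_rfl
    rwa [hsN'] at this
  have h0sk : 0 ≤ s (N-1) := (sb (N-1) (by omega)).1
  have hsklt : s (N-1) < 1 := by
    have := hss (N-1) (by omega)
    rwa [Nat.sub_add_cancel (by omega : 1 ≤ N), hsN] at this
  have hsklt' : s' (N-1) < 1 := by
    have := hss' (N-1) (by omega)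
    rwa [Nat.sub_add_cancel (by omega : 1 ≤ N), hsN'] at this
  have t := condMean_lemC_lt hg hgp hglc h0sk hsklt hsklt' (by linarith) le_rfl le_rfl
    (by rw [sub_self]; intro hcon; linarith)
  rw [sub_self, max_eq_left (by linarith), ← hxr, ← hxr'] at t
  linarith

lemma ds_unique {g w : ℝ → ℝ} {N : ℕ} {s x s' x' : ℕ → ℝ}
    (hg : Continuous g) (hgp : ∀ t ∈ Icc (0:ℝ) 1, 0 < g t) (hglc : LogConcaveOn01 g)
    (hw : Continuous w) (hwp : ∀ t ∈ Icc (0:ℝ) 1, 0 < w t) (hwlc : LogConcaveOn01 w)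
    (hN : 2 ≤ N)
    (h1 : DualSystem g w N s x) (h2 : DualSystem g w N s' x') :
    (∀ k ≤ N, s k = s' k) ∧ (∀ k, 1 ≤ k → k ≤ N → x k = x' k) := by
  have hs1 : s 1 = s' 1 := by
    rcases lt_trichotomy (s 1) (s' 1) with hc | hc | hc
    · exact absurd (ds_key hg hgp hglc hw hwp hwlc hN h1 h2 hc) id
    · exact hc
    · exact absurd (ds_key hg hgp hglc hw hwp hwlc hN h2 h1 hc) id
  obtain ⟨hs0, hsN, hss, hxdef, hsdef⟩ := h1
  obtain ⟨hs0', hsN', hss', hxdef', hsdef'⟩ := h2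
  have h1' : DualSystem g w N s x := ⟨hs0, hsN, hss, hxdef, hsdef⟩
  have h2' : DualSystem g w N s' x' := ⟨hs0', hsN', hss', hxdef', hsdef'⟩
  have sb := ds_bound h1'
  have sb' := ds_bound h2'
  have xm := ds_xmem hg hgp h1'
  have xm' := ds_xmem hg hgp h2'
  have Heq : ∀ k, 1 ≤ k → k ≤ N → s k = s' k ∧ x k = x' k := by
    intro k hk
    induction k, hk using Nat.le_induction with
    | base =>
      intro _
      refine ⟨hs1, ?_⟩
      have hx1 := hxdef 1 le_rfl (by omega)
      have hx1' := hxdef' 1 le_rfl (by omega)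
      rw [hx1, hx1', show (1:ℕ) - 1 = 0 from rfl, hs0, hs0', hs1]
    | succ k hk ih =>
      intro hk1
      obtain ⟨hsk, hxk⟩ := ih (by omega)
      have hxm1 := xm k (by omega)
      have hxm1' := xm' k (by omega)
      have hxm0 := xm (k-1) (by omega)
      rw [Nat.sub_add_cancel hk] at hxm0
      have h0xk : 0 ≤ x k := le_of_lt (lt_of_le_of_lt (sb (k-1) (by omega)).1 hxm0.1)
      have hxxk : x k < x (k+1) := lt_trans hxm0.2 hxm1.1
      have hxxk' : x k < x' (k+1) := by
        rw [hxk]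
        have hxm0' := xm' (k-1) (by omega)
        rw [Nat.sub_add_cancel hk] at hxm0'
        exact lt_trans hxm0'.2 hxm1'.1
      have h1xk1 : x (k+1) ≤ 1 := le_of_lt (lt_of_lt_of_le hxm1.2 (sb (k+1) (by omega)).2)
      have h1xk1' : x' (k+1) ≤ 1 := le_of_lt (lt_of_lt_of_le hxm1'.2 (sb' (k+1) (by omega)).2)
      have e1 : s k = condMean w (x k) (x (k+1)) := hsdef k hk (by omega)
      have e2 : s k = condMean w (x k) (x' (k+1)) := by
        rw [hsk, hxk] at e1 ⊢
        rw [hsdef' k hk (by omega)]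
      have hx_eq : x (k+1) = x' (k+1) := by
        rcases lt_trichotomy (x (k+1)) (x' (k+1)) with hc | hc | hc
        · exfalso
          have := condMean_mono_right hw hwp h0xk hxxk hc h1xk1'
          rw [← e1, ← e2] at this; exact lt_irrefl _ this
        · exact hc
        · exfalso
          have := condMean_mono_right hw hwp h0xk hxxk' hc h1xk1
          rw [← e1, ← e2] at this; exact lt_irrefl _ this
      have e3 : x (k+1) = condMean g (s k) (s (k+1)) := by
        have := hxdef (k+1) (by omega) hk1
        rwa [Nat.add_sub_cancel] at this
      have e4 : x (k+1) = condMean g (s k) (s' (k+1)) := by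
        have := hxdef' (k+1) (by omega) hk1
        rw [Nat.add_sub_cancel] at this
        rw [hx_eq, this, hsk]
      have h0sk : 0 ≤ s k := (sb k (by omega)).1
      have hssk : s k < s (k+1) := hss k (by omega)
      have hssk' : s k < s' (k+1) := by
        rw [hsk]; exact hss' k (by omega)
      have h1sk1 : s (k+1) ≤ 1 := (sb (k+1) (by omega)).2
      have h1sk1' : s' (k+1) ≤ 1 := (sb' (k+1) (by omega)).2
      have hs_eq : s (k+1) = s' (k+1) := by
        rcases lt_trichotomy (s (k+1)) (s' (k+1)) with hc | hc | hc
        · exfalso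
          have := condMean_mono_right hg hgp h0sk hssk hc h1sk1'
          rw [← e3, ← e4] at this; exact lt_irrefl _ this
        · exact hc
        · exfalso
          have := condMean_mono_right hg hgp h0sk hssk' hc h1sk1
          rw [← e3, ← e4] at this; exact lt_irrefl _ this
      exact ⟨hs_eq, hx_eq⟩
  constructor
  · intro k hk
    rcases Nat.eq_zero_or_pos k with rfl | hpos
    · rw [hs0, hs0']
    · exact (Heq k hpos hk).1
  · intro k hk1 hkN
    exact (Heq k hk1 hkN).2


/-- uniqueness of the dual system in a logconcave environment. -/
theorem stmt_1 (f u : ℝ → ℝ) (N : ℕ) (hN : 2 ≤ N)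
    (hf_cont : Continuous f) (hf_pos : ∀ t ∈ Icc (0:ℝ) 1, 0 < f t)
    (hf_prob : (∫ t in (0:ℝ)..1, f t) = 1)
    (hu : ContDiff ℝ 2 u)
    (hu'' : ∀ t ∈ Icc (0:ℝ) 1, 0 < deriv (deriv u) t)
    (hf_lc : LogConcaveOn01 f) (hu_lc : LogConcaveOn01 (deriv (deriv u)))
    (s x s' x' : ℕ → ℝ)
    (h1 : DualSystem f (deriv (deriv u)) N s x)
    (h2 : DualSystem f (deriv (deriv u)) N s' x') :
    (∀ k ≤ N, s k = s' k) ∧ (∀ k, 1 ≤ k → k ≤ N → x k = x' k) := by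
  have hw : Continuous (deriv (deriv u)) := by
    have h2' : ContDiff ℝ ((1:ℕ∞) + 1) u := by exact_mod_cast hu
    have hd1 : ContDiff ℝ (1:ℕ∞) (deriv u) := (contDiff_succ_iff_deriv.mp h2').2.2
    exact hd1.continuous_deriv (by exact_mod_cast le_refl _)
  exact ds_unique hf_cont hf_pos hf_lc hw hu'' hu_lc hN h1 h2
end

section
/- Suppose f is constant, i.e., f(t) = 1 for all t ∈ [0,1], and u'' is single-peaked: there exists m_u ∈ [0,1] such that u'' is nondecreasing on [0, m_u] and nonincreasing on [m_u, 1]. Let (0 = s₀ < s₁ < … < s_N = 1; x₁,…,x_N) be a solution of the dual system for some N ≥ 2, and suppose m_u ∈ [s_{k−1}, s_k] for some k ∈ {1,…,N}. Then the minimum of the interval widths w_i = s_i − s_{i−1} over i ∈ {1,…,N} is attained at some index i* with k−1 ≤ i* ≤ k+1. -/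
open MeasureTheory Set

open intervalIntegral in
lemma refl_integral {w : ℝ → ℝ} {a b : ℝ} (hw : Continuous w) :
    (∫ t in a..b, (t - (a+b)/2) * w t)
      = ∫ t in ((a+b)/2)..b, (t - (a+b)/2) * (w t - w (a+b-t)) := by
  set m := (a+b)/2 with hm
  have hc1 : Continuous (fun t : ℝ => (t - m) * w t) :=
    (continuous_id.sub continuous_const).mul hw
  have hc2 : Continuous (fun t : ℝ => (m - t) * w (a+b-t)) :=
    (continuous_const.sub continuous_id).mul (hw.comp (continuous_const.sub continuous_id))
  have hsplit : (∫ t in a..m, (t-m)*w t) + (∫ t in m..b, (t-m)*w t) = ∫ t in a..b, (t-m)*w t :=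
    intervalIntegral.integral_add_adjacent_intervals (hc1.intervalIntegrable _ _) (hc1.intervalIntegrable _ _)
  have hsub : (∫ t in a..m, (t-m)*w t) = ∫ t in m..b, (m - t) * w (a+b-t) := by
    have h := intervalIntegral.integral_comp_sub_left (a := m) (b := b)
      (fun t => (t-m)*w t) (a+b)
    have e1 : a + b - b = a := by ring
    have e2 : a + b - m = m := by rw [hm]; ring
    rw [e1, e2] at h
    rw [← h]
    apply intervalIntegral.integral_congr
    intro t _
    have h3 : a + b - t - m = m - t := by rw [hm]; ring
    simp only [h3]
  rw [← hsplit, hsub, ← intervalIntegral.integral_add (hc2.intervalIntegrable _ _) (hc1.intervalIntegrable _ _)]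
  apply intervalIntegral.integral_congr
  intro t _
  ring

lemma integral_sub_mid {w : ℝ → ℝ} (a b : ℝ) (hw : Continuous w) :
    (∫ t in a..b, (t - (a+b)/2) * w t)
      = (∫ t in a..b, t * w t) - (a+b)/2 * (∫ t in a..b, w t) := by
  set m := (a+b)/2
  have hc1 : Continuous (fun t : ℝ => t * w t) := continuous_id.mul hw
  have h : (∫ t in a..b, (t - m) * w t) = ∫ t in a..b, (t * w t - m * w t) := by
    apply intervalIntegral.integral_congr; intro t _; ring
  rw [h, intervalIntegral.integral_sub (f := fun t => t * w t) (g := fun t => m * w t) (hc1.intervalIntegrable _ _)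
    ((continuous_const.mul hw).intervalIntegrable _ _), intervalIntegral.integral_const_mul]

lemma denom_pos {w : ℝ → ℝ} {a b : ℝ} (hab : a < b) (hw : Continuous w)
    (hpos : ∀ t ∈ Set.Icc a b, 0 < w t) : 0 < ∫ t in a..b, w t :=
  intervalIntegral.intervalIntegral_pos_of_pos_on (hw.intervalIntegrable _ _)
    (fun t ht => hpos t ⟨ht.1.le, ht.2.le⟩) hab

lemma condMean_ge_mid {w : ℝ → ℝ} {a b : ℝ} (hab : a < b) (hw : Continuous w)
    (hpos : ∀ t ∈ Set.Icc a b, 0 < w t) (hmono : MonotoneOn w (Set.Icc a b)) :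
    (a + b) / 2 ≤ condMean w a b := by
  set m := (a+b)/2 with hm
  have hmb : m ≤ b := by rw [hm]; linarith
  have hD := denom_pos hab hw hpos
  have hE : 0 ≤ ∫ t in a..b, (t - m) * w t := by
    rw [refl_integral hw]
    apply intervalIntegral.integral_nonneg hmb
    intro t ht
    have h1 : a ≤ a + b - t := by have := ht.2; rw [hm] at *; linarith
    have h2 : a + b - t ≤ b := by have := ht.1; rw [hm] at *; linarith
    have h3 : a + b - t ≤ t := by have := ht.1; rw [hm] at *; linarith
    have h4 : a ≤ t := by have := ht.1; rw [hm] at *; linarith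
    have := hmono ⟨h1, h2⟩ ⟨h4, ht.2⟩ h3
    have h5 : 0 ≤ t - m := by linarith [ht.1]
    nlinarith
  rw [integral_sub_mid a b hw] at hE
  rw [condMean, le_div_iff₀ hD, hm]
  linarith

lemma condMean_le_mid {w : ℝ → ℝ} {a b : ℝ} (hab : a < b) (hw : Continuous w)
    (hpos : ∀ t ∈ Set.Icc a b, 0 < w t) (hmono : AntitoneOn w (Set.Icc a b)) :
    condMean w a b ≤ (a + b) / 2 := by
  set m := (a+b)/2 with hm
  have hmb : m ≤ b := by rw [hm]; linarith
  have hD := denom_pos hab hw hpos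
  have hE : (∫ t in a..b, (t - m) * w t) ≤ 0 := by
    rw [refl_integral hw]
    have h0 : 0 ≤ ∫ t in m..b, -((t - m) * (w t - w (a+b-t))) := by
      apply intervalIntegral.integral_nonneg hmb
      intro t ht
      have h1 : a ≤ a + b - t := by have := ht.2; rw [hm] at *; linarith
      have h2 : a + b - t ≤ b := by have := ht.1; rw [hm] at *; linarith
      have h3 : a + b - t ≤ t := by have := ht.1; rw [hm] at *; linarith
      have h4 : a ≤ t := by have := ht.1; rw [hm] at *; linarith
      have := hmono ⟨h1, h2⟩ ⟨h4, ht.2⟩ h3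
      have h5 : 0 ≤ t - m := by linarith [ht.1]
      nlinarith
    rw [intervalIntegral.integral_neg] at h0
    linarith
  rw [integral_sub_mid a b hw] at hE
  rw [condMean, div_le_iff₀ hD, hm]
  linarith

open intervalIntegral in
lemma condMean_one {f : ℝ → ℝ} {a b : ℝ} (hab : a < b)
    (h1 : ∀ t ∈ Set.Icc a b, f t = 1) : condMean f a b = (a + b) / 2 := by
  have hle : a ≤ b := hab.le
  have h1' : Set.EqOn f 1 (Set.uIcc a b) := by
    intro t ht; rw [Set.uIcc_of_le hle] at ht; exact h1 t ht
  have hint : (∫ t in a..b, f t) = b - a := by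
    rw [intervalIntegral.integral_congr h1']; simp
  have hint2 : (∫ t in a..b, t * f t) = (b^2 - a^2)/2 := by
    have h2 : Set.EqOn (fun t => t * f t) (fun t => t) (Set.uIcc a b) := by
      intro t ht; simp [h1' ht]
    rw [intervalIntegral.integral_congr h2, integral_id]
  rw [condMean, hint, hint2]
  have h3 : b - a ≠ 0 := by linarith
  field_simp
  ring

/-- center of scrutiny with uniform prior and single-peaked curvature. -/
theorem stmt_4 (f u : ℝ → ℝ)
    (hf_cont : Continuous f) (hf_one : ∀ t ∈ Icc (0:ℝ) 1, f t = 1)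
    (hu : ContDiff ℝ 2 u)
    (hu'' : ∀ t ∈ Icc (0:ℝ) 1, 0 < deriv (deriv u) t)
    (mu : ℝ) (hmu : mu ∈ Icc (0:ℝ) 1)
    (huup : MonotoneOn (deriv (deriv u)) (Icc 0 mu))
    (hudown : AntitoneOn (deriv (deriv u)) (Icc mu 1))
    (N : ℕ) (hN : 2 ≤ N) (s x : ℕ → ℝ)
    (hds : DualSystem f (deriv (deriv u)) N s x)
    (k : ℕ) (hk1 : 1 ≤ k) (hkN : k ≤ N)
    (hmuk : mu ∈ Icc (s (k - 1)) (s k)) :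
    ∃ istar, 1 ≤ istar ∧ istar ≤ N ∧ k - 1 ≤ istar ∧ istar ≤ k + 1 ∧
      ∀ i, 1 ≤ i → i ≤ N → s istar - s (istar - 1) ≤ s i - s (i - 1) := by
  obtain ⟨hs0, hsN, hstep, hx, hsd⟩ := hds
  set w := deriv (deriv u) with hw
  have hwcont : Continuous w := by
    have h2 : ContDiff ℝ ((1:ℕ)+1) u := by exact_mod_cast hu
    exact ((contDiff_succ_iff_deriv.mp h2).2.2).continuous_deriv le_rfl
  -- monotonicity of s
  have key : ∀ d j, j + d ≤ N → s j ≤ s (j + d) := by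
    intro d
    induction d with
    | zero => intro j _; simp
    | succ d ih =>
      intro j h
      have h1 := ih j (by omega)
      have h2 := (hstep (j+d) (by omega)).le
      have e : j + (d+1) = j + d + 1 := by omega
      rw [e]; linarith
  have sle : ∀ i j, i ≤ j → j ≤ N → s i ≤ s j := by
    intro i j hij hjN
    have h := key (j - i) i (by omega)
    rwa [Nat.add_sub_cancel' hij] at h
  have slt : ∀ i j, i < j → j ≤ N → s i < s j := by
    intro i j hij hjN
    have h1 : s i ≤ s (j-1) := sle i (j-1) (by omega) (by omega)
    have h2 := hstep (j-1) (by omega)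
    have e : j - 1 + 1 = j := by omega
    rw [e] at h2; linarith
  have sbnd : ∀ i, i ≤ N → 0 ≤ s i ∧ s i ≤ 1 := by
    intro i hi
    constructor
    · rw [← hs0]; exact sle 0 i (Nat.zero_le _) hi
    · rw [← hsN]; exact sle i N hi le_rfl
  -- midpoint formula for x
  have xmid : ∀ i, 1 ≤ i → i ≤ N → x i = (s (i-1) + s i)/2 := by
    intro i h1 h2
    rw [hx i h1 h2]
    apply condMean_one (slt (i-1) i (by omega) h2)
    intro t ht
    exact hf_one t ⟨le_trans (sbnd (i-1) (by omega)).1 ht.1, le_trans ht.2 (sbnd i h2).2⟩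
  -- key step left
  have keyL : ∀ i, 1 ≤ i → i + 1 ≤ N → s (i+1) ≤ mu →
      s (i+1) - s i ≤ s i - s (i-1) := by
    intro i h1 h2 hle
    have hxi := xmid i h1 (by omega)
    have hxi1 := xmid (i+1) (by omega) h2
    simp only [Nat.add_sub_cancel] at hxi1
    have ha := slt (i-1) i (by omega) (by omega)
    have hb := slt i (i+1) (by omega) h2
    have hxx : x i < x (i+1) := by rw [hxi, hxi1]; linarith
    have hsi : s i = condMean w (x i) (x (i+1)) := hsd i h1 (by omega)
    have hx0 : 0 ≤ x i := by
      rw [hxi]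
      have c1 := (sbnd (i-1) (by omega)).1
      have c2 := (sbnd i (by omega)).1
      linarith
    have hx1 : x (i+1) ≤ mu := by rw [hxi1]; linarith
    have hge : (x i + x (i+1))/2 ≤ s i := by
      rw [hsi]
      apply condMean_ge_mid hxx hwcont
      · intro t ht
        exact hu'' t ⟨le_trans hx0 ht.1, le_trans ht.2 (le_trans hx1 hmu.2)⟩
      · exact huup.mono (fun t ht => ⟨le_trans hx0 ht.1, le_trans ht.2 hx1⟩)
    rw [hxi, hxi1] at hge
    linarith
  -- key step right
  have keyR : ∀ i, 1 ≤ i → i + 1 ≤ N → mu ≤ s (i-1) →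
      s i - s (i-1) ≤ s (i+1) - s i := by
    intro i h1 h2 hle
    have hxi := xmid i h1 (by omega)
    have hxi1 := xmid (i+1) (by omega) h2
    simp only [Nat.add_sub_cancel] at hxi1
    have ha := slt (i-1) i (by omega) (by omega)
    have hb := slt i (i+1) (by omega) h2
    have hxx : x i < x (i+1) := by rw [hxi, hxi1]; linarith
    have hsi : s i = condMean w (x i) (x (i+1)) := hsd i h1 (by omega)
    have hx0 : mu ≤ x i := by rw [hxi]; linarith
    have hx1 : x (i+1) ≤ 1 := by
      rw [hxi1]
      have c1 := (sbnd i (by omega)).2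
      have c2 := (sbnd (i+1) h2).2
      linarith
    have hge : s i ≤ (x i + x (i+1))/2 := by
      rw [hsi]
      apply condMean_le_mid hxx hwcont
      · intro t ht
        exact hu'' t ⟨le_trans (le_trans hmu.1 hx0) ht.1, le_trans ht.2 hx1⟩
      · exact hudown.mono (fun t ht => ⟨le_trans hx0 ht.1, le_trans ht.2 hx1⟩)
    rw [hxi, hxi1] at hge
    linarith
  -- chains
  have chainL : ∀ d j, 1 ≤ j → j + d = k - 1 → s (k-1) - s (k-1-1) ≤ s j - s (j-1) := by
    intro d
    induction d with
    | zero =>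
      intro j h1 h2
      have e : j = k - 1 := by omega
      rw [e]
    | succ d ih =>
      intro j h1 h2
      have hmuj : s (j+1) ≤ mu := by
        have := sle (j+1) (k-1) (by omega) (by omega)
        linarith [hmuk.1]
      have hW := keyL j h1 (by omega) hmuj
      have hih := ih (j+1) (by omega) (by omega)
      simp only [Nat.add_sub_cancel] at hih
      linarith
  have chainR : ∀ d j, k + 1 + d = j → j ≤ N → s (k+1) - s k ≤ s j - s (j-1) := by
    intro d
    induction d with
    | zero =>
      intro j h1 h2
      rw [← h1]
      simp
    | succ d ih =>
      intro j h1 h2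
      have hih := ih (k+1+d) rfl (by omega)
      have hmuj : mu ≤ s (k+1+d-1) := by
        have e : k+1+d-1 = k+d := by omega
        rw [e]
        have := sle k (k+d) (by omega) (by omega)
        linarith [hmuk.2]
      have hW := keyR (k+1+d) (by omega) (by omega) hmuj
      have e1 : k+1+d+1 = j := by omega
      have e2 : j - 1 = k+1+d := by omega
      rw [e1] at hW
      rw [e2]
      linarith
  -- candidates
  set A := max (k-1) 1 with hA
  set C := min (k+1) N with hC
  have hAb : 1 ≤ A ∧ A ≤ N ∧ k - 1 ≤ A ∧ A ≤ k + 1 := by omega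
  have hCb : 1 ≤ C ∧ C ≤ N ∧ k - 1 ≤ C ∧ C ≤ k + 1 := by omega
  have cover : ∀ j, 1 ≤ j → j ≤ N →
      (s A - s (A-1) ≤ s j - s (j-1)) ∨ (s k - s (k-1) ≤ s j - s (j-1)) ∨
      (s C - s (C-1) ≤ s j - s (j-1)) := by
    intro j hj1 hjN
    rcases lt_trichotomy j k with h | h | h
    · left
      have e : A = k - 1 := by omega
      rw [e]
      exact chainL (k-1-j) j hj1 (by omega)
    · right; left; rw [h]
    · right; right
      have e : C = k + 1 := by omega
      rw [e]
      simp only [Nat.add_sub_cancel]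
      exact chainR (j - (k+1)) j (by omega) hjN
  have use : ∀ j, 1 ≤ j → j ≤ N → k-1 ≤ j → j ≤ k+1 →
      s j - s (j-1) ≤ s A - s (A-1) → s j - s (j-1) ≤ s k - s (k-1) →
      s j - s (j-1) ≤ s C - s (C-1) →
      (∃ istar, 1 ≤ istar ∧ istar ≤ N ∧ k - 1 ≤ istar ∧ istar ≤ k + 1 ∧
        ∀ i, 1 ≤ i → i ≤ N → s istar - s (istar - 1) ≤ s i - s (i - 1)) := by
    intro j h1 h2 h3 h4 ha hb hc
    refine ⟨j, h1, h2, h3, h4, fun i hi1 hiN => ?_⟩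
    rcases cover i hi1 hiN with h | h | h <;> linarith
  rcases le_total (s A - s (A-1)) (s k - s (k-1)) with h1 | h1 <;>
    rcases le_total (s A - s (A-1)) (s C - s (C-1)) with h2 | h2 <;>
    rcases le_total (s k - s (k-1)) (s C - s (C-1)) with h3 | h3
  · exact use A hAb.1 hAb.2.1 hAb.2.2.1 hAb.2.2.2 le_rfl h1 h2
  · exact use A hAb.1 hAb.2.1 hAb.2.2.1 hAb.2.2.2 le_rfl h1 h2
  · exact use A hAb.1 hAb.2.1 hAb.2.2.1 hAb.2.2.2 le_rfl h1 (by linarith)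
  · exact use C hCb.1 hCb.2.1 hCb.2.2.1 hCb.2.2.2 (by linarith) (by linarith) le_rfl
  · exact use k hk1 hkN (by omega) (by omega) h1 le_rfl h3
  · exact use C hCb.1 hCb.2.1 hCb.2.2.1 hCb.2.2.2 (by linarith) (by linarith) le_rfl
  · exact use k hk1 hkN (by omega) (by omega) h1 le_rfl h3
  · exact use C hCb.1 hCb.2.1 hCb.2.2.1 hCb.2.2.2 (by linarith) (by linarith) le_rfl
end
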